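/- Let f : {0,1}^n → ℝ have the bounded-differences property with constant c, and let X = (X_1,...,X_n) be independent Bernoulli(p) variables. Then the Doob martingale M_k = E[f(X) | X_1,...,X_k] has increments bounded by |M_k - M_{k-1}| ≤ c almost surely, and the conditional variance satisfies Var(M_k - M_{k-1} | X_1,...,X_{k-1}) ≤ c² p (1 - p). -/

import Mathlib

open MeasureTheory ProbabilityTheory Real

/-- Bounded differences with constant `c`. -/
def BoundedDifferences {n : ℕ} (f : (Fin n → Bool) → ℝ) (c : ℝ) : Prop :=
  ∀ (x x' : Fin n → Bool) (i : Fin n),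
    (∀ j : Fin n, j ≠ i → x j = x' j) → |f x - f x'| ≤ c

/-- The σ-algebra generated by the first `k` of the variables `X_1, ..., X_n`. -/
def firstCoords {Ω : Type*} [MeasurableSpace Ω] {n : ℕ}
    (X : Fin n → Ω → Bool) (k : ℕ) : MeasurableSpace Ω :=
  MeasurableSpace.comap (fun ω => fun i : {i : Fin n // (i : ℕ) < k} => X i.1 ω)
    inferInstance

namespace DoobIncAux

variable {n : ℕ}

noncomputable def qb (p : ℝ) (b : Bool) : ℝ := if b then p else 1 - p

lemma qb_nonneg {p : ℝ} (hp : 0 ≤ p) (hp1 : p ≤ 1) (b : Bool) : 0 ≤ qb p b := by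
  cases b <;> simp [qb] <;> linarith

lemma sum_qb (p : ℝ) : ∑ b : Bool, qb p b = 1 := by
  simp [qb]

def ovr (k : ℕ) (x : Fin n → Bool) (t : {i : Fin n // ¬ (i : ℕ) < k} → Bool) :
    Fin n → Bool := fun i => if h : (i : ℕ) < k then x i else t ⟨i, h⟩

noncomputable def Gfun (p : ℝ) (f : (Fin n → Bool) → ℝ) (k : ℕ) (x : Fin n → Bool) : ℝ :=
  ∑ t : ({i : Fin n // ¬ (i : ℕ) < k} → Bool), (∏ i, qb p (t i)) * f (ovr k x t)

lemma wt_sum (ι : Type*) [Fintype ι] [DecidableEq ι] (p : ℝ) :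
    ∑ t : ι → Bool, ∏ i, qb p (t i) = 1 := by
  rw [← Fintype.prod_sum]
  simp [qb]

lemma wt_nonneg {ι : Type*} [Fintype ι] {p : ℝ} (hp : 0 ≤ p) (hp1 : p ≤ 1) (t : ι → Bool) :
    0 ≤ ∏ i, qb p (t i) :=
  Finset.prod_nonneg fun i _ => qb_nonneg hp hp1 _

lemma Gfun_head (p : ℝ) (f : (Fin n → Bool) → ℝ) (k : ℕ) {x x' : Fin n → Bool}
    (h : ∀ i : Fin n, (i : ℕ) < k → x i = x' i) : Gfun p f k x = Gfun p f k x' := by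
  unfold Gfun
  refine Finset.sum_congr rfl fun t _ => ?_
  congr 1
  congr 1
  funext i
  unfold ovr
  split
  · exact h i ‹_›
  · rfl

lemma core (p : ℝ) (f : (Fin n → Bool) → ℝ) (k : ℕ)
    (S : Set ({i : Fin n // (i : ℕ) < k} → Bool)) [DecidablePred (· ∈ S)] :
    ∑ v : Fin n → Bool,
        (if (fun i : {i : Fin n // (i : ℕ) < k} => v i.1) ∈ S then
          Gfun p f k v * ∏ i, qb p (v i) else 0)
      = ∑ v : Fin n → Bool,
        (if (fun i : {i : Fin n // (i : ℕ) < k} => v i.1) ∈ S then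
          f v * ∏ i, qb p (v i) else 0) := by
  classical
  set e := Equiv.piEquivPiSubtypeProd (fun i : Fin n => (i : ℕ) < k) (fun _ => Bool) with he
  have hsum : ∀ F : (Fin n → Bool) → ℝ,
      ∑ v : Fin n → Bool, F v
        = ∑ u : {i : Fin n // (i : ℕ) < k} → Bool,
            ∑ t : {i : Fin n // ¬ (i : ℕ) < k} → Bool, F (e.symm (u, t)) := by
    intro F
    rw [← Equiv.sum_comp e.symm F, Fintype.sum_prod_type]
  have hres : ∀ (u : {i : Fin n // (i : ℕ) < k} → Bool)
      (t : {i : Fin n // ¬ (i : ℕ) < k} → Bool),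
      (fun i : {i : Fin n // (i : ℕ) < k} => (e.symm (u, t)) i.1) = u := by
    intro u t
    funext i
    simp [he, Equiv.piEquivPiSubtypeProd, i.2]
  have hprod : ∀ (u : {i : Fin n // (i : ℕ) < k} → Bool)
      (t : {i : Fin n // ¬ (i : ℕ) < k} → Bool),
      (∏ i, qb p ((e.symm (u, t)) i))
        = (∏ i : {i : Fin n // (i : ℕ) < k}, qb p (u i))
          * ∏ i : {i : Fin n // ¬ (i : ℕ) < k}, qb p (t i) := by
    intro u t
    rw [← Fintype.prod_subtype_mul_prod_subtype (fun i : Fin n => (i : ℕ) < k)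
      (fun i => qb p ((e.symm (u, t)) i))]
    congr 1
    · exact Finset.prod_congr rfl fun i _ => by
        simp [he, Equiv.piEquivPiSubtypeProd, i.2]
    · exact Finset.prod_congr rfl fun i _ => by
        simp [he, Equiv.piEquivPiSubtypeProd, i.2]
  have hovr : ∀ (u : {i : Fin n // (i : ℕ) < k} → Bool)
      (t t' : {i : Fin n // ¬ (i : ℕ) < k} → Bool),
      ovr k (e.symm (u, t)) t' = e.symm (u, t') := by
    intro u t t'
    funext i
    by_cases h : (i : ℕ) < k
    · simp [ovr, h, he, Equiv.piEquivPiSubtypeProd]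
    · simp [ovr, h, he, Equiv.piEquivPiSubtypeProd]
  have hG : ∀ (u : {i : Fin n // (i : ℕ) < k} → Bool)
      (t : {i : Fin n // ¬ (i : ℕ) < k} → Bool),
      Gfun p f k (e.symm (u, t))
        = ∑ t' : {i : Fin n // ¬ (i : ℕ) < k} → Bool,
            (∏ i, qb p (t' i)) * f (e.symm (u, t')) := by
    intro u t
    unfold Gfun
    exact Finset.sum_congr rfl fun t' _ => by rw [hovr]
  rw [hsum, hsum]
  refine Finset.sum_congr rfl fun u _ => ?_
  simp only [hres]
  by_cases hu : u ∈ S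
  · simp only [hu, if_pos, hprod, hG]
    have h1 : ∑ t : {i : Fin n // ¬ (i : ℕ) < k} → Bool,
        (∑ t' : {i : Fin n // ¬ (i : ℕ) < k} → Bool,
            (∏ i, qb p (t' i)) * f (e.symm (u, t')))
          * ((∏ i : {i : Fin n // (i : ℕ) < k}, qb p (u i))
            * ∏ i : {i : Fin n // ¬ (i : ℕ) < k}, qb p (t i))
        = (∑ t' : {i : Fin n // ¬ (i : ℕ) < k} → Bool,
            (∏ i, qb p (t' i)) * f (e.symm (u, t')))
          * (∏ i : {i : Fin n // (i : ℕ) < k}, qb p (u i))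
          * ∑ t : {i : Fin n // ¬ (i : ℕ) < k} → Bool,
              ∏ i : {i : Fin n // ¬ (i : ℕ) < k}, qb p (t i) := by
      rw [Finset.mul_sum]
      exact Finset.sum_congr rfl fun t _ => by ring
    rw [h1, wt_sum, mul_one, Finset.sum_mul]
    exact Finset.sum_congr rfl fun t _ => by ring
  · simp [hu]

variable {Ω : Type*} [MeasurableSpace Ω] {μ : Measure Ω}

lemma meas_single [IsProbabilityMeasure μ] {p : ℝ} (hp : 0 ≤ p)
    {X : Fin n → Ω → Bool} (hXmeas : ∀ i, Measurable (X i))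
    (hbern : ∀ i, μ {ω | X i ω = true} = ENNReal.ofReal p) (i : Fin n) (b : Bool) :
    μ (X i ⁻¹' {b}) = ENNReal.ofReal (qb p b) := by
  have htrue : μ (X i ⁻¹' {true}) = ENNReal.ofReal p := by
    have : X i ⁻¹' {true} = {ω | X i ω = true} := by ext ω; simp
    rw [this]; exact hbern i
  cases b
  · have hc : X i ⁻¹' {false} = (X i ⁻¹' {true})ᶜ := by ext ω; simp
    rw [hc, measure_compl ((hXmeas i) (measurableSet_singleton true)) (measure_ne_top μ _),
      htrue, measure_univ]
    have : qb p false = 1 - p := rfl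
    rw [this, ENNReal.ofReal_sub _ hp, ENNReal.ofReal_one]
  · exact htrue

lemma meas_vec [IsProbabilityMeasure μ] {p : ℝ} (hp : 0 ≤ p)
    {X : Fin n → Ω → Bool} (hXmeas : ∀ i, Measurable (X i))
    (hindep : iIndepFun X μ)
    (hbern : ∀ i, μ {ω | X i ω = true} = ENNReal.ofReal p) (v : Fin n → Bool) :
    μ ((fun ω (i : Fin n) => X i ω) ⁻¹' {v}) = ∏ i, ENNReal.ofReal (qb p (v i)) := by
  have hpre : (fun ω (i : Fin n) => X i ω) ⁻¹' {v} = ⋂ i ∈ Finset.univ, X i ⁻¹' {v i} := by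
    ext ω; simp [funext_iff]
  rw [hpre, hindep.measure_inter_preimage_eq_mul Finset.univ
    (sets := fun i => {v i}) (fun i _ => measurableSet_singleton _)]
  exact Finset.prod_congr rfl fun i _ => meas_single hp hXmeas hbern i (v i)

lemma meas_vec_toReal [IsProbabilityMeasure μ] {p : ℝ} (hp : 0 ≤ p) (hp1 : p ≤ 1)
    {X : Fin n → Ω → Bool} (hXmeas : ∀ i, Measurable (X i))
    (hindep : iIndepFun X μ)
    (hbern : ∀ i, μ {ω | X i ω = true} = ENNReal.ofReal p) (v : Fin n → Bool) :
    (μ ((fun ω (i : Fin n) => X i ω) ⁻¹' {v})).toReal = ∏ i, qb p (v i) := by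
  rw [meas_vec hp hXmeas hindep hbern v, ENNReal.toReal_prod]
  exact Finset.prod_congr rfl fun i _ => ENNReal.toReal_ofReal (qb_nonneg hp hp1 _)

lemma integrable_comp {α : Type*} [Fintype α] [MeasurableSpace α] [MeasurableSingletonClass α]
    [IsFiniteMeasure μ] {Z : Ω → α} (hZ : Measurable Z) (g : α → ℝ) :
    Integrable (fun ω => g (Z ω)) μ := by
  haveI : IsFiniteMeasure (μ.map Z) :=
    ⟨by rw [Measure.map_apply hZ MeasurableSet.univ]; exact measure_lt_top μ _⟩
  exact (integrable_map_measure (measurable_of_countable g).aestronglyMeasurable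
    hZ.aemeasurable).mp Integrable.of_finite

lemma setIntegral_comp {α : Type*} [Fintype α] [MeasurableSpace α] [MeasurableSingletonClass α]
    [IsFiniteMeasure μ] {Z : Ω → α} (hZ : Measurable Z) (g : α → ℝ) (S : Set α)
    [DecidablePred (· ∈ S)] :
    ∫ ω in Z ⁻¹' S, g (Z ω) ∂μ = ∑ v : α, if v ∈ S then g v * (μ (Z ⁻¹' {v})).toReal else 0 := by
  haveI : IsFiniteMeasure (μ.map Z) :=
    ⟨by rw [Measure.map_apply hZ MeasurableSet.univ]; exact measure_lt_top μ _⟩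
  have hS : MeasurableSet S := S.toFinite.measurableSet
  rw [← setIntegral_map hS (measurable_of_countable g).aestronglyMeasurable hZ.aemeasurable,
    ← integral_indicator hS, integral_fintype Integrable.of_finite]
  refine Finset.sum_congr rfl fun v _ => ?_
  rw [Measure.real, Measure.map_apply hZ (measurableSet_singleton v)]
  by_cases hv : v ∈ S <;> simp [Set.indicator, hv, mul_comm]

lemma Gfun_split (p : ℝ) (f : (Fin n → Bool) → ℝ) {k : ℕ} (hk1 : 1 ≤ k)
    (j : Fin n) (hjval : (j : ℕ) = k - 1) (x : Fin n → Bool) :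
    Gfun p f (k - 1) x
      = p * Gfun p f k (Function.update x j true)
        + (1 - p) * Gfun p f k (Function.update x j false) := by
  classical
  have hjk : (j : ℕ) < k := by omega
  have hjk1 : ¬ (j : ℕ) < k - 1 := by omega
  let d : ({i : Fin n // ¬ (i : ℕ) < k - 1} → Bool) ≃
      Bool × ({i : Fin n // ¬ (i : ℕ) < k} → Bool) :=
    { toFun := fun t => (t ⟨j, hjk1⟩, fun i => t ⟨i.1, fun h => i.2 (by omega)⟩)
      invFun := fun bs => fun i => if h : (i.1 : ℕ) < k then bs.1 else bs.2 ⟨i.1, h⟩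
      left_inv := fun t => by
        funext i
        by_cases h : (i.1 : ℕ) < k
        · simp only [dif_pos h]
          refine congrArg t (Subtype.ext (Fin.ext (show (j : ℕ) = (i.1 : ℕ) from ?_)))
          have := i.2
          omega
        · simp only [dif_neg h]
      right_inv := fun bs => by
        refine Prod.ext ?_ ?_
        · simp [hjk]
        · funext i
          simp [i.2] }
  have hdsymm : ∀ (bs : Bool × ({i : Fin n // ¬ (i : ℕ) < k} → Bool))
      (i : {i : Fin n // ¬ (i : ℕ) < k - 1}),
      d.symm bs i = if h : (i.1 : ℕ) < k then bs.1 else bs.2 ⟨i.1, h⟩ := by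
    intro bs i; rfl
  have hq : ∀ (bs : Bool × ({i : Fin n // ¬ (i : ℕ) < k} → Bool)),
      (∏ i : {i : Fin n // ¬ (i : ℕ) < k - 1}, qb p (d.symm bs i))
        = qb p bs.1 * ∏ i : {i : Fin n // ¬ (i : ℕ) < k}, qb p (bs.2 i) := by
    intro bs
    rw [← Finset.mul_prod_erase Finset.univ (fun i => qb p (d.symm bs i))
      (Finset.mem_univ (⟨j, hjk1⟩ : {i : Fin n // ¬ (i : ℕ) < k - 1}))]
    have hmem : ∀ a : {i : Fin n // ¬ (i : ℕ) < k - 1},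
        a ∈ Finset.univ.erase (⟨j, hjk1⟩ : {i : Fin n // ¬ (i : ℕ) < k - 1}) →
          ¬ (a.1 : ℕ) < k := by
      intro a ha h
      rcases Finset.mem_erase.mp ha with ⟨hne, -⟩
      have h2 := a.2
      exact hne (Subtype.ext (Fin.ext (show (a.1 : ℕ) = (j : ℕ) by omega)))
    congr 1
    · rw [hdsymm, dif_pos hjk]
    · refine Finset.prod_bij' (fun a ha => (⟨a.1, hmem a ha⟩ : {i : Fin n // ¬ (i : ℕ) < k}))
        (fun a _ => (⟨a.1, fun h => a.2 (by omega)⟩ : {i : Fin n // ¬ (i : ℕ) < k - 1}))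
        (fun a ha => Finset.mem_univ _) (fun a ha => ?_) (fun a ha => Subtype.ext rfl)
        (fun a ha => Subtype.ext rfl) (fun a ha => ?_)
      · refine Finset.mem_erase.mpr ⟨?_, Finset.mem_univ _⟩
        intro hcon
        have hval : (a.1 : ℕ) = (j : ℕ) := by
          have := congrArg (fun z : {i : Fin n // ¬ (i : ℕ) < k - 1} => ((z.1 : Fin n) : ℕ)) hcon
          simpa using this
        have := a.2
        omega
      · rw [hdsymm, dif_neg (hmem a ha)]
  have hovr2 : ∀ (b : Bool) (s : {i : Fin n // ¬ (i : ℕ) < k} → Bool),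
      ovr (k - 1) x (d.symm (b, s)) = ovr k (Function.update x j b) s := by
    intro b s
    funext i
    by_cases h : (i : ℕ) < k
    · by_cases h1 : (i : ℕ) < k - 1
      · have hij : i ≠ j := fun hc => by rw [hc] at h1; omega
        simp [ovr, h, h1, Function.update_of_ne hij]
      · have hij : i = j := Fin.ext (by omega)
        subst hij
        simp [ovr, h1, hjk, hdsymm]
    · have h1 : ¬ (i : ℕ) < k - 1 := by omega
      simp [ovr, h, h1, hdsymm]
  show (∑ t : {i : Fin n // ¬ (i : ℕ) < k - 1} → Bool,
      (∏ i, qb p (t i)) * f (ovr (k - 1) x t)) = _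
  rw [← Equiv.sum_comp d.symm
    (fun t => (∏ i, qb p (t i)) * f (ovr (k - 1) x t)), Fintype.sum_prod_type,
    Fintype.sum_bool]
  have htrue : (∑ s : {i : Fin n // ¬ (i : ℕ) < k} → Bool,
      (∏ i, qb p (d.symm (true, s) i)) * f (ovr (k - 1) x (d.symm (true, s))))
      = p * ∑ s : {i : Fin n // ¬ (i : ℕ) < k} → Bool,
          (∏ i, qb p (s i)) * f (ovr k (Function.update x j true) s) := by
    rw [Finset.mul_sum]
    refine Finset.sum_congr rfl fun s _ => ?_
    rw [hq (true, s), hovr2 true s]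
    have hqq : qb p true = p := rfl
    rw [hqq]; ring
  have hfalse : (∑ s : {i : Fin n // ¬ (i : ℕ) < k} → Bool,
      (∏ i, qb p (d.symm (false, s) i)) * f (ovr (k - 1) x (d.symm (false, s))))
      = (1 - p) * ∑ s : {i : Fin n // ¬ (i : ℕ) < k} → Bool,
          (∏ i, qb p (s i)) * f (ovr k (Function.update x j false) s) := by
    rw [Finset.mul_sum]
    refine Finset.sum_congr rfl fun s _ => ?_
    rw [hq (false, s), hovr2 false s]
    have hqq : qb p false = 1 - p := rfl
    rw [hqq]; ring
  rw [htrue, hfalse]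
  rfl

lemma Gfun_diff_le {p c : ℝ} (hp : 0 ≤ p) (hp1 : p ≤ 1) {f : (Fin n → Bool) → ℝ}
    (hf : BoundedDifferences f c) (k : ℕ) (j : Fin n) (hjk : (j : ℕ) < k)
    (x : Fin n → Bool) :
    |Gfun p f k (Function.update x j true) - Gfun p f k (Function.update x j false)| ≤ c := by
  unfold Gfun
  rw [← Finset.sum_sub_distrib]
  refine (Finset.abs_sum_le_sum_abs _ _).trans ?_
  have hterm : ∀ t : {i : Fin n // ¬ (i : ℕ) < k} → Bool,
      |(∏ i, qb p (t i)) * f (ovr k (Function.update x j true) t)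
        - (∏ i, qb p (t i)) * f (ovr k (Function.update x j false) t)|
        ≤ (∏ i, qb p (t i)) * c := by
    intro t
    rw [← mul_sub, abs_mul, abs_of_nonneg (wt_nonneg hp hp1 t)]
    refine mul_le_mul_of_nonneg_left ?_ (wt_nonneg hp hp1 t)
    refine hf _ _ j fun i hij => ?_
    by_cases h : (i : ℕ) < k
    · simp [ovr, h, Function.update_of_ne hij]
    · simp [ovr, h]
  refine (Finset.sum_le_sum fun t _ => hterm t).trans ?_
  rw [← Finset.sum_mul, wt_sum, one_mul]

lemma condexp_eq_Gfun [IsProbabilityMeasure μ] {p : ℝ} (hp : 0 ≤ p) (hp1 : p ≤ 1)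
    {X : Fin n → Ω → Bool} (hXmeas : ∀ i, Measurable (X i))
    (hindep : iIndepFun X μ)
    (hbern : ∀ i, μ {ω | X i ω = true} = ENNReal.ofReal p)
    (f : (Fin n → Bool) → ℝ) (k : ℕ) :
    (fun ω => Gfun p f k (fun i => X i ω)) =ᵐ[μ]
      μ[(fun ω => f (fun i => X i ω)) | firstCoords X k] := by
  classical
  have hXvec : Measurable (fun ω (i : Fin n) => X i ω) :=
    measurable_pi_lambda _ hXmeas
  have hφ : Measurable (fun ω => fun i : {i : Fin n // (i : ℕ) < k} => X i.1 ω) :=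
    measurable_pi_lambda _ fun i => hXmeas i.1
  have hm : firstCoords X k ≤ ‹MeasurableSpace Ω› := hφ.comap_le
  refine ae_eq_condExp_of_forall_setIntegral_eq hm (integrable_comp hXvec f)
    (fun s _ _ => (integrable_comp hXvec (Gfun p f k)).integrableOn)
    (fun s hs _ => ?_) ?_
  · obtain ⟨S, -, rfl⟩ := hs
    have hpre : (fun ω => fun i : {i : Fin n // (i : ℕ) < k} => X i.1 ω) ⁻¹' S
        = (fun ω (i : Fin n) => X i ω) ⁻¹'
            ((fun (v : Fin n → Bool) => fun i : {i : Fin n // (i : ℕ) < k} => v i.1) ⁻¹' S) :=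
      rfl
    rw [hpre, setIntegral_comp hXvec (Gfun p f k) _, setIntegral_comp hXvec f _]
    have hrw : ∀ g : (Fin n → Bool) → ℝ,
        (∑ v : Fin n → Bool,
          if v ∈ ((fun (v : Fin n → Bool) =>
              fun i : {i : Fin n // (i : ℕ) < k} => v i.1) ⁻¹' S) then
            g v * (μ ((fun ω (i : Fin n) => X i ω) ⁻¹' {v})).toReal else 0)
        = ∑ v : Fin n → Bool,
            if (fun i : {i : Fin n // (i : ℕ) < k} => v i.1) ∈ S then
              g v * ∏ i, qb p (v i) else 0 := by
      intro g
      refine Finset.sum_congr rfl fun v _ => ?_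
      rw [meas_vec_toReal hp hp1 hXmeas hindep hbern v]
      simp [Set.mem_preimage]
    rw [hrw, hrw]
    exact core p f k S
  · let h : ({i : Fin n // (i : ℕ) < k} → Bool) → ℝ := fun u =>
      Gfun p f k (fun i => if hh : (i : ℕ) < k then u ⟨i, hh⟩ else false)
    have heq : (fun ω => Gfun p f k (fun i => X i ω))
        = fun ω => h ((fun ω => fun i : {i : Fin n // (i : ℕ) < k} => X i.1 ω) ω) := by
      funext ω
      exact Gfun_head p f k fun i hi => by simp [hi]
    rw [heq]
    have hmeas' : Measurable[firstCoords X k]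
        (fun ω => fun i : {i : Fin n // (i : ℕ) < k} => X i.1 ω) :=
      fun s hs => ⟨s, hs, rfl⟩
    exact StronglyMeasurable.aestronglyMeasurable
      (Measurable.stronglyMeasurable
        ((measurable_of_countable h).comp hmeas'))

end DoobIncAux

open DoobIncAux in
/-- Increments of the Doob martingale `M_k = E[f(X) | X_1, ..., X_k]` of a
bounded-differences function of i.i.d. Bernoulli(p) variables are bounded by `c`
and have conditional variance at most `c² p (1-p)`. -/
theorem doob_martingale_increments
    {Ω : Type*} [MeasurableSpace Ω] (μ : Measure Ω) [IsProbabilityMeasure μ]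
    {n : ℕ} (p c : ℝ) (hp : 0 ≤ p) (hp1 : p ≤ 1) (hc : 0 < c)
    (X : Fin n → Ω → Bool) (hXmeas : ∀ i, Measurable (X i))
    (hindep : iIndepFun X μ)
    (hbern : ∀ i, μ {ω | X i ω = true} = ENNReal.ofReal p)
    (f : (Fin n → Bool) → ℝ) (hf : BoundedDifferences f c)
    (M : ℕ → Ω → ℝ)
    (hM : ∀ k, M k = μ[(fun ω => f (fun i => X i ω)) | firstCoords X k])
    (k : ℕ) (hk1 : 1 ≤ k) (hkn : k ≤ n) :
    (∀ᵐ ω ∂μ, |M k ω - M (k - 1) ω| ≤ c) ∧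
      (∀ᵐ ω ∂μ,
        (μ[(fun ω' => (M k ω' - M (k - 1) ω') ^ 2) | firstCoords X (k - 1)]) ω
          ≤ c ^ 2 * p * (1 - p)) := by
  classical
  have hjlt : k - 1 < n := by omega
  set j : Fin n := ⟨k - 1, hjlt⟩ with hjdef
  have hjval : (j : ℕ) = k - 1 := rfl
  have hjk : (j : ℕ) < k := by omega
  have hXvec : Measurable (fun ω (i : Fin n) => X i ω) :=
    measurable_pi_lambda _ hXmeas
  have hMk : M k =ᵐ[μ] fun ω => Gfun p f k (fun i => X i ω) := by
    rw [hM k]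
    exact (condexp_eq_Gfun hp hp1 hXmeas hindep hbern f k).symm
  have hMk1 : M (k - 1) =ᵐ[μ] fun ω => Gfun p f (k - 1) (fun i => X i ω) := by
    rw [hM (k - 1)]
    exact (condexp_eq_Gfun hp hp1 hXmeas hindep hbern f (k - 1)).symm
  set Gt : Ω → ℝ := fun ω => Gfun p f k (Function.update (fun i => X i ω) j true) with hGt
  set Gf : Ω → ℝ := fun ω => Gfun p f k (Function.update (fun i => X i ω) j false) with hGf
  have hGkpt : ∀ ω, Gfun p f k (fun i => X i ω) = if X j ω then Gt ω else Gf ω := by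
    intro ω
    by_cases hXj : X j ω = true
    · rw [if_pos hXj]
      show _ = Gfun p f k (Function.update (fun i => X i ω) j true)
      have hupd : Function.update (fun i => X i ω) j true = fun i => X i ω := by
        conv_lhs => rw [← hXj]
        exact Function.update_eq_self j _
      rw [hupd]
    · rw [if_neg hXj]
      have hXj' : X j ω = false := by simpa using hXj
      show _ = Gfun p f k (Function.update (fun i => X i ω) j false)
      have hupd : Function.update (fun i => X i ω) j false = fun i => X i ω := by
        conv_lhs => rw [← hXj']
        exact Function.update_eq_self j _
      rw [hupd]
  have hGk1pt : ∀ ω, Gfun p f (k - 1) (fun i => X i ω) = p * Gt ω + (1 - p) * Gf ω :=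
    fun ω => Gfun_split p f hk1 j hjval _
  have hdiff : ∀ ω, |Gt ω - Gf ω| ≤ c :=
    fun ω => Gfun_diff_le hp hp1 hf k j hjk _
  have hdiffsq : ∀ ω, (Gt ω - Gf ω) ^ 2 ≤ c ^ 2 := by
    intro ω
    have h1 := hdiff ω
    have h2 := abs_nonneg (Gt ω - Gf ω)
    nlinarith [sq_abs (Gt ω - Gf ω)]
  constructor
  · filter_upwards [hMk, hMk1] with ω h1 h2
    rw [h1, h2, hGkpt ω, hGk1pt ω]
    have habs := abs_le.mp (hdiff ω)
    by_cases hXj : X j ω = true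
    · rw [if_pos hXj]
      rw [show Gt ω - (p * Gt ω + (1 - p) * Gf ω) = (1 - p) * (Gt ω - Gf ω) by ring,
        abs_mul, abs_of_nonneg (by linarith : (0:ℝ) ≤ 1 - p)]
      nlinarith [abs_nonneg (Gt ω - Gf ω), hdiff ω]
    · rw [if_neg hXj]
      rw [show Gf ω - (p * Gt ω + (1 - p) * Gf ω) = -(p * (Gt ω - Gf ω)) by ring,
        abs_neg, abs_mul, abs_of_nonneg hp]
      nlinarith [abs_nonneg (Gt ω - Gf ω), hdiff ω]
  · have hm'le : firstCoords X (k - 1) ≤ ‹MeasurableSpace Ω› :=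
      (measurable_pi_lambda
        (fun ω => fun i : {i : Fin n // (i : ℕ) < k - 1} => X i.1 ω)
        (fun i => hXmeas i.1)).comap_le
    set D : Ω → ℝ := fun ω =>
      Gfun p f k (fun i => X i ω) - Gfun p f (k - 1) (fun i => X i ω) with hD
    set R : Ω → ℝ := fun ω =>
      c ^ 2 * (if X j ω then (1 - p) ^ 2 else p ^ 2) with hR
    have hsq : (fun ω' => (M k ω' - M (k - 1) ω') ^ 2) =ᵐ[μ] fun ω => D ω ^ 2 := by
      filter_upwards [hMk, hMk1] with ω h1 h2
      rw [h1, h2]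
    have hDint : Integrable (fun ω => D ω ^ 2) μ :=
      integrable_comp hXvec
        (fun v => (Gfun p f k v - Gfun p f (k - 1) v) ^ 2)
    have hRint : Integrable R μ :=
      integrable_comp (hXmeas j) (fun b => c ^ 2 * (if b then (1 - p) ^ 2 else p ^ 2))
    have hpt : ∀ ω, D ω ^ 2 ≤ R ω := by
      intro ω
      show (Gfun p f k (fun i => X i ω) - Gfun p f (k - 1) (fun i => X i ω)) ^ 2
        ≤ c ^ 2 * (if X j ω then (1 - p) ^ 2 else p ^ 2)
      rw [hGkpt ω, hGk1pt ω]
      by_cases hXj : X j ω = true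
      · rw [if_pos hXj, if_pos hXj,
          show Gt ω - (p * Gt ω + (1 - p) * Gf ω) = (1 - p) * (Gt ω - Gf ω) by ring]
        have := hdiffsq ω
        nlinarith [mul_nonneg (mul_nonneg (by linarith : (0:ℝ) ≤ 1 - p)
          (by linarith : (0:ℝ) ≤ 1 - p)) (sq_nonneg (Gt ω - Gf ω))]
      · rw [if_neg hXj, if_neg hXj,
          show Gf ω - (p * Gt ω + (1 - p) * Gf ω) = -(p * (Gt ω - Gf ω)) by ring]
        have := hdiffsq ω
        nlinarith [mul_nonneg (mul_nonneg hp hp) (sq_nonneg (Gt ω - Gf ω))]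
    have hmono : μ[fun ω => D ω ^ 2 | firstCoords X (k - 1)]
        ≤ᵐ[μ] μ[R | firstCoords X (k - 1)] :=
      condExp_mono hDint hRint (Filter.Eventually.of_forall hpt)
    have hindep2 : Indep (MeasurableSpace.comap (X j) inferInstance)
        (firstCoords X (k - 1)) μ := by
      set T : Finset (Fin n) := Finset.univ.filter (fun i => (i : ℕ) < k - 1) with hT
      have hdisj : Disjoint ({j} : Finset (Fin n)) T := by
        simp only [Finset.disjoint_left, Finset.mem_singleton]
        rintro a rfl ha
        rw [hT, Finset.mem_filter] at ha
        omega
      have h1 := hindep.indepFun_finset {j} T hdisj hXmeas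
      rw [IndepFun_iff_Indep] at h1
      have hle1 : MeasurableSpace.comap (X j) inferInstance ≤
          MeasurableSpace.comap
            (fun ω => fun i : {x : Fin n // x ∈ ({j} : Finset (Fin n))} => X i.1 ω)
            inferInstance := by
        rintro s ⟨t, ht, rfl⟩
        refine ⟨(fun u : {x : Fin n // x ∈ ({j} : Finset (Fin n))} → Bool =>
          u ⟨j, Finset.mem_singleton_self j⟩) ⁻¹' t,
          (measurable_pi_apply _) ht, rfl⟩
      have hle2 : firstCoords X (k - 1) ≤ MeasurableSpace.comap
          (fun ω => fun i : {x : Fin n // x ∈ T} => X i.1 ω) inferInstance := by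
        rintro s ⟨t, ht, rfl⟩
        refine ⟨(fun (u : {x : Fin n // x ∈ T} → Bool)
            (i : {i : Fin n // (i : ℕ) < k - 1}) =>
            u ⟨i.1, by rw [hT, Finset.mem_filter]; exact ⟨Finset.mem_univ _, i.2⟩⟩) ⁻¹' t,
          (measurable_of_countable _) ht, rfl⟩
      exact indep_of_indep_of_le_left (indep_of_indep_of_le_right h1 hle2) hle1
    have hRsm : StronglyMeasurable[MeasurableSpace.comap (X j) inferInstance] R := by
      refine Measurable.stronglyMeasurable ?_
      have hXjm : Measurable[MeasurableSpace.comap (X j) inferInstance] (X j) :=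
        fun s hs => ⟨s, hs, rfl⟩
      exact (measurable_of_countable
        (fun b => c ^ 2 * (if b then (1 - p) ^ 2 else p ^ 2))).comp hXjm
    have hconst : μ[R | firstCoords X (k - 1)] =ᵐ[μ] fun _ => ∫ ω, R ω ∂μ :=
      condExp_indep_eq (hXmeas j).comap_le hm'le hRsm hindep2
    have hRval : ∫ ω, R ω ∂μ = c ^ 2 * (p * (1 - p)) := by
      have h0 := setIntegral_comp (μ := μ) (hXmeas j)
        (fun b => c ^ 2 * (if b then (1 - p) ^ 2 else p ^ 2)) (Set.univ)
      rw [Set.preimage_univ, Measure.restrict_univ] at h0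
      rw [hR]
      rw [h0, Fintype.sum_bool, meas_single hp hXmeas hbern j true,
        meas_single hp hXmeas hbern j false]
      have hq1 : qb p true = p := rfl
      have hq2 : qb p false = 1 - p := rfl
      rw [hq1, hq2, ENNReal.toReal_ofReal hp,
        ENNReal.toReal_ofReal (by linarith : (0:ℝ) ≤ 1 - p)]
      simp only [Set.mem_univ, if_true]
      norm_num
      ring
    filter_upwards [condExp_congr_ae (m := firstCoords X (k - 1)) hsq, hmono, hconst]
      with ω h1 h2 h3
    calc (μ[(fun ω' => (M k ω' - M (k - 1) ω') ^ 2) | firstCoords X (k - 1)]) ω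
        = (μ[fun ω => D ω ^ 2 | firstCoords X (k - 1)]) ω := h1
      _ ≤ (μ[R | firstCoords X (k - 1)]) ω := h2
      _ = ∫ ω, R ω ∂μ := h3
      _ = c ^ 2 * (p * (1 - p)) := hRval
      _ ≤ c ^ 2 * p * (1 - p) := le_of_eq (by ring)
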